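/- Let λ ∈ Γ_k^+ ⊂ ℝ^n, 1 ≤ l ≤ k ≤ n−1, and let a_0,…,a_{l-1} ≥ 0 and b_l,…,b_k ≥ 0 be reals with ∑_{i=0}^{l-1} a_i H_i(λ) = ∑_{j=l}^{k} b_j H_j(λ) > 0. Then ∑_{j=l}^{k} b_j H_{j+1}(λ) ≤ ∑_{i=0}^{l-1} a_i H_{i+1}(λ), with equality only if λ = c(1,…,1). -/

import Mathlib

/-- The `k`-th elementary symmetric polynomial of `x ∈ ℝⁿ`. -/
noncomputable def sigmaE (n k : ℕ) (x : Fin n → ℝ) : ℝ :=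
  ∑ s ∈ Finset.powersetCard k (Finset.univ : Finset (Fin n)), ∏ i ∈ s, x i

/-- The normalized `k`-th elementary symmetric polynomial `H_k = σ_k / C(n,k)`. -/
noncomputable def Hnorm (n k : ℕ) (x : Fin n → ℝ) : ℝ := sigmaE n k x / (n.choose k)

/-- The Gårding cone `Γ_k⁺ = {x : σ_i(x) > 0 for all 1 ≤ i ≤ k}`. -/
def GardingCone (n k : ℕ) : Set (Fin n → ℝ) :=
  {x | ∀ i, 1 ≤ i → i ≤ k → 0 < sigmaE n i x}

open Polynomial Finset

noncomputable def HM (s : Multiset ℝ) (j : ℕ) : ℝ :=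
  s.esymm j / ((Multiset.card s).choose j)

lemma esymm_neg (s : Multiset ℝ) (j : ℕ) :
    (s.map (fun a => -a)).esymm j = (-1)^j * s.esymm j := by
  unfold Multiset.esymm
  rw [Multiset.powersetCard_map, Multiset.map_map]
  rw [show (Multiset.map (Multiset.prod ∘ Multiset.map fun a => -a) (Multiset.powersetCard j s))
      = Multiset.map (fun t => (-1)^j * t.prod) (Multiset.powersetCard j s) from
    Multiset.map_congr rfl (fun t ht => by
      simp only [Function.comp_apply, Multiset.prod_map_neg,
        (Multiset.mem_powersetCard.mp ht).2])]
  rw [Multiset.sum_map_mul_left]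

noncomputable def PolyOf (s : Multiset ℝ) : ℝ[X] := (s.map fun a => X - C a).prod

lemma polyOf_monic (s : Multiset ℝ) : (PolyOf s).Monic :=
  monic_multiset_prod_of_monic _ _ fun a _ => monic_X_sub_C a

lemma polyOf_natDegree (s : Multiset ℝ) : (PolyOf s).natDegree = Multiset.card s :=
  natDegree_multiset_prod_X_sub_C_eq_card s

lemma polyOf_roots (s : Multiset ℝ) : (PolyOf s).roots = s :=
  roots_multiset_prod_X_sub_C s

lemma polyOf_coeff (s : Multiset ℝ) {k : ℕ} (hk : k ≤ Multiset.card s) :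
    (PolyOf s).coeff k = (-1)^(Multiset.card s - k) * s.esymm (Multiset.card s - k) := by
  have h1 : PolyOf s = ((s.map (fun a => -a)).map fun a => X + C a).prod := by
    rw [Multiset.map_map]
    exact congrArg _ (Multiset.map_congr rfl fun a _ => by simp [sub_eq_add_neg])
  rw [h1, Multiset.prod_X_add_C_coeff _ (by simpa using hk), Multiset.card_map, esymm_neg]

lemma deriv_step (s : Multiset ℝ) (hn : 1 ≤ Multiset.card s) :
    Multiset.card (derivative (PolyOf s)).roots = Multiset.card s - 1 ∧
    derivative (PolyOf s)
      = C ((Multiset.card s : ℝ)) * PolyOf ((derivative (PolyOf s)).roots) ∧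
    ∀ j, j + 1 ≤ Multiset.card s →
      (Multiset.card s : ℝ) * (derivative (PolyOf s)).roots.esymm j
        = ((Multiset.card s - j : ℕ) : ℝ) * s.esymm j := by
  set n := Multiset.card s with hns
  set p := PolyOf s with hp
  set q := derivative p with hq
  have hdeg : p.natDegree = n := polyOf_natDegree s
  have hmon : p.Monic := polyOf_monic s
  have hcpn : p.coeff n = 1 := by
    have := hmon.leadingCoeff; rwa [leadingCoeff, hdeg] at this
  have hqcoeff : q.coeff (n-1) = (n : ℝ) := by
    rw [hq, coeff_derivative, Nat.sub_add_cancel hn, hcpn, one_mul]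
    rw [← Nat.cast_add_one, Nat.sub_add_cancel hn]
  have hnR : (n : ℝ) ≠ 0 := Nat.cast_ne_zero.mpr (by omega)
  have hq0 : q ≠ 0 := fun h => hnR (by rw [← hqcoeff, h, coeff_zero])
  have hqdeg : q.natDegree = n - 1 := by
    refine le_antisymm ?_ (le_natDegree_of_ne_zero (by rw [hqcoeff]; exact hnR))
    calc q.natDegree ≤ p.natDegree - 1 := natDegree_derivative_le p
    _ = n - 1 := by rw [hdeg]
  have hcard : Multiset.card q.roots = n - 1 := by
    have h1 : Multiset.card q.roots ≤ n - 1 := hqdeg ▸ q.card_roots'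
    have h2 : n ≤ Multiset.card q.roots + 1 := by
      have := p.card_roots_le_derivative
      rwa [polyOf_roots, ← hns] at this
    omega
  have hlc : q.leadingCoeff = (n : ℝ) := by rw [leadingCoeff, hqdeg, hqcoeff]
  have hfact : q = C (n : ℝ) * PolyOf q.roots := by
    conv_lhs => rw [← C_leadingCoeff_mul_prod_multiset_X_sub_C (hcard.trans hqdeg.symm)]
    rw [hlc]; rfl
  refine ⟨hcard, hfact, fun j hj => ?_⟩
  -- compute coeff q (n-1-j) two ways
  have e1 : n - 1 - j + 1 = n - j := by omega
  have e2 : n - (n - j) = j := by omega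
  have e3 : (n - 1) - (n - 1 - j) = j := by omega
  have ec : ((n-1-j : ℕ) : ℝ) + 1 = ((n-j : ℕ) : ℝ) := by rw [← Nat.cast_add_one, e1]
  have way1 : q.coeff (n-1-j) = ((n - j : ℕ) : ℝ) * ((-1)^j * s.esymm j) := by
    rw [hq, coeff_derivative, e1, polyOf_coeff s (Nat.sub_le n j), e2, ec]
    ring
  have way2 : q.coeff (n-1-j) = (n : ℝ) * ((-1)^j * (q.roots).esymm j) := by
    conv_lhs => rw [hfact]
    rw [coeff_C_mul, polyOf_coeff q.roots (k := n-1-j) (by rw [hcard]; omega),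
      hcard, e3]
  have hth := way1.symm.trans way2
  have hpow : ((-1 : ℝ)^j) ≠ 0 := pow_ne_zero _ (by norm_num)
  refine mul_left_cancel₀ hpow ?_
  linear_combination -hth

-- A' : sum over subsets of size card-1 = sum over erasures
lemma sum_powersetCard_pred {ι : Type*} [DecidableEq ι] (t : Finset ι) (ht : t.Nonempty)
    (x : ι → ℝ) :
    ∑ s ∈ t.powersetCard (t.card - 1), ∏ i ∈ s, x i = ∑ i ∈ t, ∏ j ∈ t.erase i, x j := by
  refine (Finset.sum_bij (fun i hi => t.erase i) ?_ ?_ ?_ ?_).symm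
  · intro i hi
    rw [Finset.mem_powersetCard]
    exact ⟨Finset.erase_subset _ _, Finset.card_erase_of_mem hi⟩
  · intro i hi j hj h
    by_contra hij
    have : i ∈ t.erase i := by rw [h]; exact Finset.mem_erase.mpr ⟨hij, hi⟩
    exact (Finset.notMem_erase i t) this
  · intro s hs
    rw [Finset.mem_powersetCard] at hs
    have hcd : (t \ s).card = 1 := by
      rw [Finset.card_sdiff_of_subset hs.1, hs.2]
      have := Finset.card_pos.mpr ht
      omega
    obtain ⟨i, hi⟩ := Finset.card_eq_one.mp hcd
    have hit : i ∈ t := by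
      have : i ∈ t \ s := hi ▸ Finset.mem_singleton_self i
      exact (Finset.mem_sdiff.mp this).1
    refine ⟨i, hit, ?_⟩
    have his : i ∉ s := by
      have : i ∈ t \ s := hi ▸ Finset.mem_singleton_self i
      exact (Finset.mem_sdiff.mp this).2
    refine (Finset.eq_of_subset_of_card_le (Finset.subset_erase.mpr ⟨hs.1, his⟩) ?_).symm
    rw [Finset.card_erase_of_mem hit, hs.2]
  · intro i hi; rfl

lemma sum_erase_powersetCard (n k : ℕ) (hk : k ≤ n) (x : Fin n → ℝ) :
    ∑ i : Fin n, ∑ s ∈ ((univ : Finset (Fin n)).erase i).powersetCard k, ∏ j ∈ s, x j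
      = ((n - k : ℕ) : ℝ) * sigmaE n k x := by
  have hpc : ∀ i : Fin n, ((univ : Finset (Fin n)).erase i).powersetCard k
      = (Finset.powersetCard k univ).filter (fun s => i ∉ s) := by
    intro i
    ext s
    simp only [Finset.mem_powersetCard, Finset.mem_filter, Finset.subset_erase,
      Finset.subset_univ, true_and]
    tauto
  simp only [hpc, Finset.sum_filter]
  rw [Finset.sum_comm]
  have key : ∀ s ∈ Finset.powersetCard k (univ : Finset (Fin n)),
      (∑ i : Fin n, if i ∉ s then (∏ j ∈ s, x j) else 0)
        = ((n - k : ℕ) : ℝ) * ∏ j ∈ s, x j := by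
    intro s hs
    have hcs : s.card = k := (Finset.mem_powersetCard_univ.mp hs)
    have h2 : ∀ i : Fin n, (if i ∉ s then (∏ j ∈ s, x j) else 0)
        = (if i ∈ sᶜ then (∏ j ∈ s, x j) else 0) := by
      intro i; simp [Finset.mem_compl]
    rw [Finset.sum_congr rfl (fun i _ => h2 i)]
    rw [Finset.sum_ite_mem, Finset.univ_inter, Finset.sum_const, Finset.card_compl, hcs,
      Fintype.card_fin, nsmul_eq_mul]
  rw [Finset.sum_congr rfl key, ← Finset.mul_sum, sigmaE]

lemma sigmaE_top (n : ℕ) (x : Fin n → ℝ) : sigmaE n n x = ∏ i, x i := by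
  have hcu : (univ : Finset (Fin n)).card = n := by simp
  have hps := Finset.powersetCard_self (univ : Finset (Fin n))
  rw [hcu] at hps
  rw [sigmaE, hps]
  simp

lemma newton_base (n : ℕ) (hn : 2 ≤ n) (x : Fin n → ℝ) :
    2*(n:ℝ)*(sigmaE n (n-2) x * sigmaE n n x) ≤ ((n:ℝ)-1) * sigmaE n (n-1) x^2 ∧
    (((n:ℝ)-1) * sigmaE n (n-1) x^2 = 2*(n:ℝ)*(sigmaE n (n-2) x * sigmaE n n x) →
      0 < sigmaE n (n-1) x → ∃ c, ∀ p, x p = c) := by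
  haveI : Nonempty (Fin n) := ⟨⟨0, by omega⟩⟩
  set P : Fin n → ℝ := fun i => ∏ j ∈ (univ : Finset (Fin n)).erase i, x j with hP
  set Q : ℝ := ∑ i, P i with hQ
  set R : ℝ := ∑ i, (P i)^2 with hR
  have hxP : ∀ i, x i * P i = sigmaE n n x := by
    intro i
    rw [sigmaE_top, hP]
    exact Finset.mul_prod_erase univ x (Finset.mem_univ i)
  have hA : sigmaE n (n-1) x = Q := by
    rw [sigmaE, hQ]
    have := sum_powersetCard_pred (univ : Finset (Fin n))
      (Finset.univ_nonempty (α := Fin n)) x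
    rwa [Finset.card_univ, Fintype.card_fin] at this
  -- pairs identity
  have hC : ∀ i : Fin n, ∀ j ∈ (univ : Finset (Fin n)).erase i,
      P i * P j = sigmaE n n x * ∏ l ∈ ((univ : Finset (Fin n)).erase i).erase j, x l := by
    intro i j hj
    have h1 : P i = x j * ∏ l ∈ ((univ : Finset (Fin n)).erase i).erase j, x l :=
      (Finset.mul_prod_erase _ x hj).symm
    rw [h1, ← hxP j]
    ring
  have hpair : ∑ i : Fin n, ∑ j ∈ (univ : Finset (Fin n)).erase i, P i * P j
      = sigmaE n n x * (2 * sigmaE n (n-2) x) := by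
    rw [Finset.sum_congr rfl (fun i _ => Finset.sum_congr rfl (hC i))]
    have h2 : ∀ i : Fin n, ∑ j ∈ (univ : Finset (Fin n)).erase i,
        sigmaE n n x * ∏ l ∈ ((univ : Finset (Fin n)).erase i).erase j, x l
        = sigmaE n n x * ∑ s ∈ ((univ : Finset (Fin n)).erase i).powersetCard (n-2),
            ∏ l ∈ s, x l := by
      intro i
      rw [← Finset.mul_sum]
      congr 1
      have hne : ((univ : Finset (Fin n)).erase i).Nonempty := by
        rw [← Finset.card_pos, Finset.card_erase_of_mem (Finset.mem_univ i),
          Finset.card_univ, Fintype.card_fin]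
        omega
      have := (sum_powersetCard_pred ((univ : Finset (Fin n)).erase i) hne x).symm
      rwa [Finset.card_erase_of_mem (Finset.mem_univ i), Finset.card_univ,
        Fintype.card_fin, show n - 1 - 1 = n - 2 from by omega] at this
    rw [Finset.sum_congr rfl (fun i _ => h2 i), ← Finset.mul_sum]
    congr 1
    rw [sum_erase_powersetCard n (n-2) (by omega) x, show n - (n-2) = 2 from by omega]
    norm_num
  have hQR : ∑ i : Fin n, ∑ j ∈ (univ : Finset (Fin n)).erase i, P i * P j = Q^2 - R := by
    have h3 : ∀ i : Fin n, ∑ j ∈ (univ : Finset (Fin n)).erase i, P i * P j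
        = P i * Q - (P i)^2 := by
      intro i
      rw [← Finset.mul_sum, Finset.sum_erase_eq_sub (Finset.mem_univ i), ← hQ]
      ring
    rw [Finset.sum_congr rfl (fun i _ => h3 i), Finset.sum_sub_distrib, ← Finset.sum_mul,
      ← hQ, ← hR]
    ring
  have hsos : ∑ i : Fin n, ∑ j : Fin n, (P i - P j)^2 = 2*((n:ℝ)*R - Q^2) := by
    have h4 : ∀ i : Fin n, ∑ j : Fin n, (P i - P j)^2
        = (n:ℝ)*(P i)^2 - 2*(P i)*Q + R := by
      intro i
      have : ∀ j : Fin n, (P i - P j)^2 = (P i)^2 - 2*(P i)*(P j) + (P j)^2 := fun j => by ring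
      rw [Finset.sum_congr rfl (fun j _ => this j)]
      rw [Finset.sum_add_distrib, Finset.sum_sub_distrib, Finset.sum_const, ← hR,
        Finset.card_univ, Fintype.card_fin, ← Finset.mul_sum, ← hQ, nsmul_eq_mul]
      try ring
    rw [Finset.sum_congr rfl (fun i _ => h4 i), Finset.sum_add_distrib,
      Finset.sum_sub_distrib, Finset.sum_const, Finset.card_univ, Fintype.card_fin,
      nsmul_eq_mul]
    have e1 : ∑ i : Fin n, (n:ℝ) * P i ^2 = (n:ℝ) * R := by rw [← Finset.mul_sum, ← hR]
    have e2 : ∑ i : Fin n, 2 * P i * Q = (2*Q) * Q := by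
      have h5 : ∀ i : Fin n, 2 * P i * Q = (2*Q) * P i := fun i => by ring
      rw [Finset.sum_congr rfl (fun i _ => h5 i), ← Finset.mul_sum, ← hQ]
    rw [e1, e2]
    ring
  have hkey : ((n:ℝ)-1) * sigmaE n (n-1) x^2 - 2*(n:ℝ)*(sigmaE n (n-2) x * sigmaE n n x)
      = (∑ i : Fin n, ∑ j : Fin n, (P i - P j)^2) / 2 := by
    rw [hsos, hA]
    have := hpair.symm.trans hQR
    nlinarith [this]
  have hsosnn : 0 ≤ ∑ i : Fin n, ∑ j : Fin n, (P i - P j)^2 :=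
    Finset.sum_nonneg fun i _ => Finset.sum_nonneg fun j _ => sq_nonneg _
  constructor
  · nlinarith [hkey, hsosnn]
  · intro heq hpos
    have hzero : ∑ i : Fin n, ∑ j : Fin n, (P i - P j)^2 = 0 := by
      nlinarith [hkey]
    have hPeq : ∀ i j : Fin n, P i = P j := by
      intro i j
      have h5 := (Finset.sum_eq_zero_iff_of_nonneg
        (fun i _ => Finset.sum_nonneg fun j _ => sq_nonneg (P i - P j))).mp hzero i
        (Finset.mem_univ i)
      have h6 := (Finset.sum_eq_zero_iff_of_nonneg
        (fun j _ => sq_nonneg (P i - P j))).mp h5 j (Finset.mem_univ j)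
      have := sq_eq_zero_iff.mp h6
      linarith
    set i0 : Fin n := ⟨0, by omega⟩ with hi0
    have hQP : Q = n * P i0 := by
      rw [hQ, Finset.sum_congr rfl (fun i _ => hPeq i i0), Finset.sum_const,
        Finset.card_univ, Fintype.card_fin, nsmul_eq_mul]
    have hPpos : 0 < P i0 := by
      rw [hA, hQP] at hpos
      nlinarith [hpos]
    refine ⟨sigmaE n n x / P i0, fun p => ?_⟩
    rw [← hxP p, hPeq p i0]
    field_simp

lemma HM_deriv (s : Multiset ℝ) (hn : 1 ≤ Multiset.card s) (j : ℕ)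
    (hj : j + 1 ≤ Multiset.card s) :
    HM (derivative (PolyOf s)).roots j = HM s j := by
  obtain ⟨hcard, -, hesymm⟩ := deriv_step s hn
  set n := Multiset.card s with hns
  set t := (derivative (PolyOf s)).roots with ht
  have key := hesymm j hj
  have hnat : (n - j) * n.choose j = n * (n-1).choose j := by
    have h1 := Nat.add_one_mul_choose_eq (n-1) j
    rw [show n - 1 + 1 = n from by omega] at h1
    have h2 := Nat.choose_succ_right_eq n j
    rw [mul_comm]
    exact (h1.trans h2).symm
  have hc1 : 0 < n.choose j := Nat.choose_pos (by omega)
  have hc2 : 0 < (n-1).choose j := Nat.choose_pos (by omega)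
  rw [HM, HM, hcard, ← hns]
  rw [div_eq_div_iff (by exact_mod_cast hc2.ne') (by exact_mod_cast hc1.ne')]
  have hnR : (n : ℝ) ≠ 0 := Nat.cast_ne_zero.mpr (by omega)
  refine mul_left_cancel₀ hnR ?_
  have hcast : ((n - j : ℕ) : ℝ) * (n.choose j : ℕ) = (n : ℝ) * ((n-1).choose j : ℕ) := by
    exact_mod_cast congrArg Nat.cast hnat
  calc (n:ℝ) * (t.esymm j * (n.choose j : ℕ))
      = ((n:ℝ) * t.esymm j) * (n.choose j : ℕ) := by ring
    _ = (((n - j : ℕ) : ℝ) * s.esymm j) * (n.choose j : ℕ) := by rw [key]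
    _ = s.esymm j * (((n - j : ℕ) : ℝ) * (n.choose j : ℕ)) := by ring
    _ = s.esymm j * ((n : ℝ) * ((n-1).choose j : ℕ)) := by rw [hcast]
    _ = (n:ℝ) * (s.esymm j * ((n-1).choose j : ℕ)) := by ring

lemma list_esymm (L : List ℝ) (j : ℕ) :
    (L : Multiset ℝ).esymm j = sigmaE L.length j L.get := by
  have h1 : (Finset.univ.val.map L.get) = ((List.finRange L.length).map L.get : Multiset ℝ) :=
    rfl
  have hmap : ((Finset.univ.val.map L.get) : Multiset ℝ) = ↑L := by
    rw [h1, ← List.ofFn_eq_map, List.ofFn_get]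
  rw [← hmap, Finset.esymm_map_val]
  rfl

lemma climb (s : Multiset ℝ) (c : ℝ) (h3 : 3 ≤ Multiset.card s)
    (hrt : (derivative (PolyOf s)).roots = Multiset.replicate (Multiset.card s - 1) c) :
    ∀ r ∈ s, r = c := by
  set n := Multiset.card s with hns
  obtain ⟨-, hfact, -⟩ := deriv_step s (by omega)
  have hrep : PolyOf (Multiset.replicate (n-1) c) = (X - C c)^(n-1) := by
    rw [PolyOf, Multiset.map_replicate, Multiset.prod_replicate]
  rw [hrt, hrep] at hfact
  have hder : derivative ((X - C c)^n : ℝ[X]) = C (n:ℝ) * (X - C c)^(n-1) := by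
    rw [derivative_pow, derivative_X_sub_C, mul_one]
  have hg : derivative (PolyOf s - (X - C c)^n) = 0 := by
    rw [derivative_sub, hder, hfact, sub_self]
  have hgC : PolyOf s - (X - C c)^n = C ((PolyOf s - (X - C c)^n).coeff 0) :=
    eq_C_of_natDegree_eq_zero (natDegree_eq_zero_of_derivative_eq_zero hg)
  set e := (PolyOf s - (X - C c)^n).coeff 0 with he
  have hp : PolyOf s = (X - C c)^n + C e := by
    rw [← hgC]; ring
  by_cases he0 : e = 0
  · rw [he0, map_zero, add_zero] at hp
    intro r hr
    have : r ∈ (PolyOf s).roots := by rw [polyOf_roots]; exact hr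
    rw [hp, roots_pow, roots_X_sub_C] at this
    have := (Multiset.mem_nsmul.mp this).2
    exact Multiset.mem_singleton.mp this
  · exfalso
    have hroot : ∀ r ∈ s, (r - c)^n = -e := by
      intro r hr
      have hmem : r ∈ (PolyOf s).roots := by rw [polyOf_roots]; exact hr
      have := (mem_roots (polyOf_monic s).ne_zero).mp hmem
      rw [IsRoot, hp] at this
      simp only [eval_add, eval_pow, eval_sub, eval_X, eval_C] at this
      linarith
    have hrc : ∀ r ∈ s, r ≠ c := by
      intro r hr hrc
      apply he0
      have := hroot r hr
      rw [hrc, sub_self, zero_pow (by omega)] at this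
      linarith
    have hcount : ∀ r : ℝ, s.count r ≤ 1 := by
      intro r
      by_contra hcnt
      push_neg at hcnt
      have hrs : r ∈ s := by
        apply Multiset.count_pos.mp; omega
      have hmult : rootMultiplicity r (PolyOf s) = s.count r := by
        rw [← count_roots, polyOf_roots]
      have hisroot : (PolyOf s).IsRoot r := by
        have hmem : r ∈ (PolyOf s).roots := by rw [polyOf_roots]; exact hrs
        exact (mem_roots (polyOf_monic s).ne_zero).mp hmem
      have hd := derivative_rootMultiplicity_of_root hisroot
      have : 1 ≤ rootMultiplicity r (derivative (PolyOf s)) := by omega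
      have hmemd : r ∈ (derivative (PolyOf s)).roots := by
        apply Multiset.count_pos.mp
        rw [count_roots]; omega
      rw [hrt] at hmemd
      exact hrc r hrs (Multiset.eq_of_mem_replicate hmemd)
    have hnodup : s.Nodup := Multiset.nodup_iff_count_le_one.mpr hcount
    obtain ⟨r0, hr0⟩ := Multiset.exists_mem_of_ne_zero
      (Multiset.card_pos.mp (show 0 < Multiset.card s from by rw [← hns]; omega))
    set d := |r0 - c| with hd
    have habs : ∀ r ∈ s, |r - c| = d := by
      intro r hr
      have h1 : |r - c|^n = |r0 - c|^n := by
        rw [← abs_pow, ← abs_pow, hroot r hr, hroot r0 hr0]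
      exact (pow_left_inj₀ (abs_nonneg _) (abs_nonneg _) (by omega)).mp h1
    have htf : s.toFinset ⊆ ({c + d, c - d} : Finset ℝ) := by
      intro r hr
      have hrs := Multiset.mem_toFinset.mp hr
      have h2 := habs r hrs
      simp only [Finset.mem_insert, Finset.mem_singleton]
      rcases abs_cases (r - c) with ⟨h, -⟩ | ⟨h, -⟩
      · left; linarith [h2 ▸ h]
      · right; linarith [h2 ▸ h]
    have hcard2 : s.toFinset.card ≤ 2 := by
      refine le_trans (Finset.card_le_card htf) ?_
      refine le_trans (Finset.card_insert_le _ _) ?_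
      simp
    have htfc : s.toFinset.card = n := by
      rw [Multiset.toFinset_card_of_nodup hnodup, ← hns]
    omega

lemma arith1 (nr A B D : ℝ) (hn : 2 ≤ nr) (h : 2*nr*(A*D) ≤ (nr-1)*B^2) :
    A / (nr*(nr-1)/2) * (D/1) ≤ (B/nr)^2 := by
  rw [div_one, div_pow, div_mul_eq_mul_div,
    div_le_div_iff₀ (by nlinarith) (by nlinarith)]
  nlinarith [mul_le_mul_of_nonneg_left h (by linarith : (0:ℝ) ≤ nr)]

lemma arith2 (nr A B D : ℝ) (hn : 2 ≤ nr) (h : (B/nr)^2 = A / (nr*(nr-1)/2) * (D/1)) :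
    (nr-1)*B^2 = 2*nr*(A*D) := by
  rw [div_one, div_pow, div_mul_eq_mul_div,
    div_eq_div_iff (by nlinarith) (by nlinarith)] at h
  have hnr : nr ≠ 0 := by linarith
  refine mul_left_cancel₀ hnr ?_
  linear_combination 2*h

lemma newton_base_HM (s : Multiset ℝ) (i : ℕ) (hcard : Multiset.card s = i + 2) :
    HM s i * HM s (i+2) ≤ HM s (i+1)^2 ∧
    (HM s (i+1)^2 = HM s i * HM s (i+2) → 0 < HM s (i+1) → ∃ c, ∀ r ∈ s, r = c) := by
  set L := s.toList with hL
  have hlen : L.length = Multiset.card s := s.length_toList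
  set n := L.length with hn
  have hn2 : n = i + 2 := hlen.trans hcard
  have hes : ∀ j, s.esymm j = sigmaE n j L.get := by
    intro j
    rw [← list_esymm L j, hL, Multiset.coe_toList]
  have hHM : ∀ j, HM s j = sigmaE n j L.get / ((n.choose j : ℕ) : ℝ) := by
    intro j
    rw [HM, hes j, ← hlen]
  obtain ⟨hineq, heqc⟩ := newton_base n (by omega) L.get
  rw [show n - 2 = i from by omega, show n - 1 = i + 1 from by omega,
    congrArg (fun k => sigmaE n k L.get) hn2] at hineq heqc
  have hch1 : ((n.choose (i+1) : ℕ) : ℝ) = (n : ℝ) := by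
    rw [show i + 1 = n - 1 from by omega, Nat.choose_symm (by omega),
      Nat.choose_one_right]
  have hch2 : ((n.choose (i+2) : ℕ) : ℝ) = 1 := by
    rw [show i + 2 = n from by omega, Nat.choose_self, Nat.cast_one]
  have hch0 : ((n.choose i : ℕ) : ℝ) = (n : ℝ) * ((n:ℝ) - 1) / 2 := by
    rw [show i = n - 2 from by omega, Nat.choose_symm (by omega), Nat.cast_choose_two]
  have hnn : (2:ℝ) ≤ (n:ℝ) := by exact_mod_cast (by omega : 2 ≤ n)
  have hmem : ∀ r, r ∈ s ↔ ∃ p : Fin n, L.get p = r := by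
    intro r
    rw [show s = (↑L : Multiset ℝ) from by rw [hL, Multiset.coe_toList],
      Multiset.mem_coe]
    exact List.mem_iff_get
  rw [hHM i, hHM (i+1), hHM (i+2), hch0, hch1, hch2]
  constructor
  · exact arith1 _ _ _ _ hnn hineq
  · intro he hpos
    have hB : 0 < sigmaE n (i+1) L.get := by
      by_contra hB
      push_neg at hB
      have : sigmaE n (i+1) L.get / (n:ℝ) ≤ 0 := by
        apply div_nonpos_of_nonpos_of_nonneg hB (by linarith)
      linarith
    obtain ⟨c, hc⟩ := heqc (arith2 _ _ _ _ hnn he) hB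
    exact ⟨c, fun r hr => by obtain ⟨p, hp⟩ := (hmem r).mp hr; rw [← hp, hc p]⟩

theorem newton_master (N : ℕ) : ∀ (s : Multiset ℝ), Multiset.card s = N → ∀ i : ℕ,
    i + 2 ≤ N →
    HM s i * HM s (i+2) ≤ HM s (i+1)^2 ∧
    (HM s (i+1)^2 = HM s i * HM s (i+2) → 0 < HM s i → 0 < HM s (i+1) →
      ∃ c, ∀ r ∈ s, r = c) := by
  induction N with
  | zero => intro s hs i hi; omega
  | succ N ih =>
    intro s hs i hi
    rcases eq_or_lt_of_le hi with heqN | hlt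
    · obtain ⟨h1, h2⟩ := newton_base_HM s i (by omega)
      exact ⟨h1, fun he _ hp2 => h2 he hp2⟩
    · have hcs : 1 ≤ Multiset.card s := by omega
      obtain ⟨hcard, -, -⟩ := deriv_step s hcs
      have hct : Multiset.card (derivative (PolyOf s)).roots = N := by omega
      have hHMe : ∀ j, j + 1 ≤ N + 1 → HM (derivative (PolyOf s)).roots j = HM s j := by
        intro j hj
        exact HM_deriv s hcs j (by omega)
      obtain ⟨h1, h2⟩ := ih (derivative (PolyOf s)).roots hct i (by omega)
      rw [hHMe i (by omega), hHMe (i+1) (by omega), hHMe (i+2) (by omega)] at h1 h2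
      refine ⟨h1, fun he hp1 hp2 => ?_⟩
      obtain ⟨c, hc⟩ := h2 he hp1 hp2
      have hrep : (derivative (PolyOf s)).roots = Multiset.replicate (Multiset.card s - 1) c := by
        apply Multiset.eq_replicate.mpr
        exact ⟨by omega, hc⟩
      exact ⟨c, climb s c (by omega) hrep⟩

lemma Hnorm_eq_HM (n : ℕ) (x : Fin n → ℝ) (j : ℕ) :
    Hnorm n j x = HM (Finset.univ.val.map x) j := by
  have hc : Multiset.card (Finset.univ.val.map x) = n := by
    rw [Multiset.card_map]
    simp
  rw [Hnorm, HM, hc, Finset.esymm_map_val]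
  rfl

theorem newton_fn (n i : ℕ) (hin : i + 2 ≤ n) (x : Fin n → ℝ) :
    Hnorm n i x * Hnorm n (i+2) x ≤ Hnorm n (i+1) x^2 ∧
    (Hnorm n (i+1) x^2 = Hnorm n i x * Hnorm n (i+2) x → 0 < Hnorm n i x →
      0 < Hnorm n (i+1) x → ∃ c, ∀ p, x p = c) := by
  have hc : Multiset.card (Finset.univ.val.map x) = n := by
    rw [Multiset.card_map]
    simp
  obtain ⟨h1, h2⟩ := newton_master n (Finset.univ.val.map x) hc i hin
  rw [← Hnorm_eq_HM, ← Hnorm_eq_HM, ← Hnorm_eq_HM] at h1 h2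
  refine ⟨h1, fun he hp1 hp2 => ?_⟩
  obtain ⟨c, hc2⟩ := h2 he hp1 hp2
  exact ⟨c, fun p => hc2 (x p) (Multiset.mem_map_of_mem x (Finset.mem_univ p))⟩

section Chain
variable {n k : ℕ} {x : Fin n → ℝ}

lemma sigmaE_zero : sigmaE n 0 x = 1 := by
  simp [sigmaE]

lemma Hnorm_zero : Hnorm n 0 x = 1 := by
  simp [Hnorm, sigmaE_zero]

lemma Hpos (hx : x ∈ GardingCone n k) (hk : k ≤ n) : ∀ j, j ≤ k → 0 < Hnorm n j x := by
  intro j hj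
  rcases Nat.eq_zero_or_pos j with h0 | hp
  · rw [h0, Hnorm_zero]; norm_num
  · have hσ : 0 < sigmaE n j x := hx j hp hj
    have hc : 0 < (n.choose j : ℝ) := by
      exact_mod_cast Nat.choose_pos (le_trans hj hk)
    exact div_pos hσ hc

lemma ratio_step (hx : x ∈ GardingCone n k) (hkn : k + 1 ≤ n) (j : ℕ) (hj : j + 1 ≤ k) :
    Hnorm n (j+2) x / Hnorm n (j+1) x ≤ Hnorm n (j+1) x / Hnorm n j x := by
  have hN := (newton_fn n j (by omega) x).1
  have h0 := Hpos hx (by omega) j (by omega)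
  have h1 := Hpos hx (by omega) (j+1) hj
  rw [div_le_div_iff₀ h1 h0]
  nlinarith [hN]

lemma ratio_anti (hx : x ∈ GardingCone n k) (hkn : k + 1 ≤ n) :
    ∀ i j, i ≤ j → j ≤ k →
      Hnorm n (j+1) x / Hnorm n j x ≤ Hnorm n (i+1) x / Hnorm n i x := by
  intro i j hij hjk
  induction j with
  | zero => rw [Nat.le_zero.mp hij]
  | succ m ihm =>
    rcases Nat.lt_or_ge i (m+1) with hlt | hge
    · calc Hnorm n (m+2) x / Hnorm n (m+1) x
          ≤ Hnorm n (m+1) x / Hnorm n m x := ratio_step hx hkn m hjk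
        _ ≤ Hnorm n (i+1) x / Hnorm n i x := ihm (by omega) (by omega)
    · rw [show i = m + 1 from by omega]

lemma cross_ineq (hx : x ∈ GardingCone n k) (hkn : k + 1 ≤ n) (i j : ℕ)
    (hij : i ≤ j) (hjk : j ≤ k) :
    Hnorm n i x * Hnorm n (j+1) x ≤ Hnorm n (i+1) x * Hnorm n j x := by
  have h := ratio_anti hx hkn i j hij hjk
  have hi := Hpos hx (by omega) i (by omega)
  have hj := Hpos hx (by omega) j hjk
  rw [div_le_div_iff₀ hj hi] at h
  nlinarith [h]

lemma cross_eq (hx : x ∈ GardingCone n k) (hkn : k + 1 ≤ n) (i j : ℕ)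
    (hij : i < j) (hjk : j ≤ k)
    (he : Hnorm n i x * Hnorm n (j+1) x = Hnorm n (i+1) x * Hnorm n j x) :
    ∃ c, ∀ p, x p = c := by
  obtain ⟨j', rfl⟩ : ∃ j', j = j' + 1 := ⟨j - 1, by omega⟩
  -- r_{j'} = r_{j'+1}
  have hi := Hpos hx (by omega) i (by omega)
  have hj' := Hpos hx (by omega) j' (by omega)
  have hj1 := Hpos hx (by omega) (j'+1) hjk
  have hri : Hnorm n (j'+2) x / Hnorm n (j'+1) x = Hnorm n (i+1) x / Hnorm n i x := by
    rw [div_eq_div_iff hj1.ne' hi.ne']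
    nlinarith [he]
  have h1 : Hnorm n (j'+1) x / Hnorm n j' x ≤ Hnorm n (i+1) x / Hnorm n i x :=
    ratio_anti hx hkn i j' (by omega) (by omega)
  have h2 : Hnorm n (j'+2) x / Hnorm n (j'+1) x ≤ Hnorm n (j'+1) x / Hnorm n j' x :=
    ratio_step hx hkn j' hjk
  have h3 : Hnorm n (j'+1) x / Hnorm n j' x = Hnorm n (j'+2) x / Hnorm n (j'+1) x := by
    rw [hri]; linarith
  have hNe : Hnorm n (j'+1) x ^2 = Hnorm n j' x * Hnorm n (j'+2) x := by
    rw [div_eq_div_iff hj'.ne' hj1.ne'] at h3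
    nlinarith [h3]
  exact (newton_fn n j' (by omega) x).2 hNe hj' hj1
end Chain


/-- Weighted sum comparison (raised indices): let `λ ∈ Γ_k⁺`, `1 ≤ l ≤ k ≤ n-1`,
and let `a_0,…,a_{l-1} ≥ 0`, `b_l,…,b_k ≥ 0` with
`∑_{i=0}^{l-1} a_i H_i(λ) = ∑_{j=l}^{k} b_j H_j(λ) > 0`. Then
`∑_{j=l}^{k} b_j H_{j+1}(λ) ≤ ∑_{i=0}^{l-1} a_i H_{i+1}(λ)`, with equality only if
`λ = c(1,…,1)`. -/
theorem stmt18 (n k l : ℕ) (hl : 1 ≤ l) (hlk : l ≤ k) (hkn : k ≤ n - 1)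
    (x : Fin n → ℝ) (hx : x ∈ GardingCone n k)
    (a b : ℕ → ℝ) (ha : ∀ i, 0 ≤ a i) (hb : ∀ j, 0 ≤ b j)
    (heq : ∑ i ∈ Finset.range l, a i * Hnorm n i x
      = ∑ j ∈ Finset.Icc l k, b j * Hnorm n j x)
    (hpos : 0 < ∑ j ∈ Finset.Icc l k, b j * Hnorm n j x) :
    ∑ j ∈ Finset.Icc l k, b j * Hnorm n (j+1) x
      ≤ ∑ i ∈ Finset.range l, a i * Hnorm n (i+1) x ∧
    (∑ j ∈ Finset.Icc l k, b j * Hnorm n (j+1) x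
        = ∑ i ∈ Finset.range l, a i * Hnorm n (i+1) x →
      ∃ c : ℝ, ∀ p, x p = c) := by

  have hkn' : k + 1 ≤ n := by omega
  set SA := ∑ i ∈ Finset.range l, a i * Hnorm n i x with hSA
  set TA := ∑ i ∈ Finset.range l, a i * Hnorm n (i+1) x with hTA
  set TB := ∑ j ∈ Finset.Icc l k, b j * Hnorm n (j+1) x with hTB
  have hSApos : 0 < SA := by rw [heq]; exact hpos
  have hL : SA * TB = ∑ i ∈ Finset.range l, ∑ j ∈ Finset.Icc l k,
      (a i * b j) * (Hnorm n i x * Hnorm n (j+1) x) := by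
    rw [hSA, Finset.sum_mul]
    refine Finset.sum_congr rfl fun i _ => ?_
    rw [hTB, Finset.mul_sum]
    exact Finset.sum_congr rfl fun j _ => by ring
  have hR : SA * TA = ∑ i ∈ Finset.range l, ∑ j ∈ Finset.Icc l k,
      (a i * b j) * (Hnorm n (i+1) x * Hnorm n j x) := by
    rw [show SA * TA = TA * SA from mul_comm _ _, heq, hTA, Finset.sum_mul]
    refine Finset.sum_congr rfl fun i _ => ?_
    rw [Finset.mul_sum]
    exact Finset.sum_congr rfl fun j _ => by ring
  have hterm : ∀ i ∈ Finset.range l, ∀ j ∈ Finset.Icc l k,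
      (a i * b j) * (Hnorm n i x * Hnorm n (j+1) x)
        ≤ (a i * b j) * (Hnorm n (i+1) x * Hnorm n j x) := by
    intro i hi j hj
    rw [Finset.mem_range] at hi
    rw [Finset.mem_Icc] at hj
    exact mul_le_mul_of_nonneg_left
      (cross_ineq hx hkn' i j (by omega) hj.2)
      (mul_nonneg (ha i) (hb j))
  have hdbl : SA * TB ≤ SA * TA := by
    rw [hL, hR]
    exact Finset.sum_le_sum fun i hi => Finset.sum_le_sum fun j hj => hterm i hi j hj
  have hmain : TB ≤ TA := le_of_mul_le_mul_left hdbl hSApos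
  refine ⟨hmain, fun heTT => ?_⟩
  -- equality case
  have hdeq : ∑ i ∈ Finset.range l, ∑ j ∈ Finset.Icc l k,
      ((a i * b j) * (Hnorm n (i+1) x * Hnorm n j x)
        - (a i * b j) * (Hnorm n i x * Hnorm n (j+1) x)) = 0 := by
    rw [Finset.sum_congr rfl fun i _ => Finset.sum_sub_distrib _ _, Finset.sum_sub_distrib,
      ← hR, ← hL, heTT]
    ring
  have hall : ∀ i ∈ Finset.range l, ∀ j ∈ Finset.Icc l k,
      (a i * b j) * (Hnorm n (i+1) x * Hnorm n j x)
        - (a i * b j) * (Hnorm n i x * Hnorm n (j+1) x) = 0 := by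
    have houter := (Finset.sum_eq_zero_iff_of_nonneg (fun i hi =>
      Finset.sum_nonneg fun j hj => sub_nonneg.mpr (hterm i hi j hj))).mp hdeq
    intro i hi j hj
    exact (Finset.sum_eq_zero_iff_of_nonneg (fun j hj =>
      sub_nonneg.mpr (hterm i hi j hj))).mp (houter i hi) j hj
  -- find positive indices
  obtain ⟨i0, hi0m, hi0⟩ := Finset.exists_ne_zero_of_sum_ne_zero (hSApos.ne' : SA ≠ 0)
  have hBne : (∑ j ∈ Finset.Icc l k, b j * Hnorm n j x) ≠ 0 := hpos.ne'
  obtain ⟨j0, hj0m, hj0⟩ := Finset.exists_ne_zero_of_sum_ne_zero hBne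
  rw [Finset.mem_range] at hi0m
  have hj0m' := Finset.mem_Icc.mp hj0m
  have ha0 : 0 < a i0 := by
    rcases lt_or_eq_of_le (ha i0) with h | h
    · exact h
    · exact absurd (by rw [← h, zero_mul]) hi0
  have hb0 : 0 < b j0 := by
    rcases lt_or_eq_of_le (hb j0) with h | h
    · exact h
    · exact absurd (by rw [← h, zero_mul]) hj0
  have hkey := hall i0 (Finset.mem_range.mpr hi0m) j0 hj0m
  have hcr : Hnorm n i0 x * Hnorm n (j0+1) x = Hnorm n (i0+1) x * Hnorm n j0 x := by
    have hab : 0 < a i0 * b j0 := mul_pos ha0 hb0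
    have := sub_eq_zero.mp hkey
    nlinarith [this]
  exact cross_eq hx hkn' i0 j0 (by omega) hj0m'.2 hcr
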